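/- Let m ≥ 4 be even, n ≥ m, and σ ∈ Sₙ. Then with 3(m/2 − 1) outsiders added, σ⁻¹ can be written as a product of m-cycles in S_{n+3(m/2−1)}, each moving at least one outsider, with all m-cycles in the product having pairwise distinct supports. -/

import Mathlib

open Equiv Equiv.Perm

private lemma core12 (m n : ℕ) (hm : 4 ≤ m) (hmn : m ≤ n)
    (OL : List (Fin (n + 3 * (m / 2 - 1))))
    (hnd : OL.Nodup) (hlen : OL.length = m - 2)
    (hval : ∀ o ∈ OL, n ≤ o.val ∧ o.val < n + 3 * (m / 2 - 1) - 1) :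
    ∀ k (π : Equiv.Perm (Fin (n + 3 * (m / 2 - 1)))),
      π.support.card ≤ k → Equiv.Perm.sign π = 1 →
      (∀ z, π z ≠ z → z.val < n ∨ z.val = n + 3 * (m / 2 - 1) - 1) →
      ∃ cs : List (Equiv.Perm (Fin (n + 3 * (m / 2 - 1)))),
        π = cs.prod ∧
        (∀ c ∈ cs, c.IsCycle ∧ c.support.card = m ∧
          ∃ a b, a ∈ π.support ∧ b ∈ π.support ∧ a ≠ b ∧
            c.support = insert a (insert b OL.toFinset)) ∧
        cs.Pairwise (fun c d => c.support ≠ d.support) := by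
  have hnotOL : ∀ z : Fin (n + 3 * (m / 2 - 1)),
      (z.val < n ∨ z.val = n + 3 * (m / 2 - 1) - 1) → z ∉ OL.toFinset := by
    intro z hz hmem
    rw [List.mem_toFinset] at hmem
    obtain ⟨h1, h2⟩ := hval z hmem
    omega
  intro k
  induction k with
  | zero =>
    intro π hcard _ _
    have hπ : π = 1 := by
      rw [← Equiv.Perm.support_eq_empty_iff]
      exact Finset.card_eq_zero.mp (Nat.le_zero.mp hcard)
    exact ⟨[], by simp [hπ], by simp, List.Pairwise.nil⟩
  | succ k ih =>
    intro π hcard hsign hmoved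
    by_cases hπ : π = 1
    · exact ⟨[], by simp [hπ], by simp, List.Pairwise.nil⟩
    have h2 : 2 ≤ π.support.card := Equiv.Perm.one_lt_card_support_of_ne_one hπ
    have h3 : 3 ≤ π.support.card := by
      rcases Nat.lt_or_ge π.support.card 3 with h | h
      · have hc2 : π.support.card = 2 := by omega
        obtain ⟨x, y, hxy, rfl⟩ := Equiv.Perm.card_support_eq_two.mp hc2
        rw [Equiv.Perm.sign_swap hxy] at hsign
        exact absurd hsign (by decide)
      · exact h
    obtain ⟨i, hi⟩ := Finset.card_pos.mp (by omega : 0 < π.support.card)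
    set x := π i with hx
    have hmovi : π i ≠ i := Equiv.Perm.mem_support.mp hi
    have hxi : x ≠ i := hmovi
    have hxs : x ∈ π.support := by
      rw [hx]; exact Equiv.Perm.apply_mem_support.mpr hi
    have hy : (π.support \ {i, x}).Nonempty := by
      rw [← Finset.card_pos]
      have h1 : π.support.card - ({i, x} : Finset _).card ≤ (π.support \ {i, x}).card :=
        Finset.le_card_sdiff _ _
      have hle : ({i, x} : Finset _).card ≤ 2 :=
        (Finset.card_insert_le _ _).trans (by simp)
      omega
    obtain ⟨y, hymem⟩ := hy
    rw [Finset.mem_sdiff, Finset.mem_insert, Finset.mem_singleton, not_or] at hymem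
    have hys : y ∈ π.support := hymem.1
    have hyi : y ≠ i := hymem.2.1
    have hyx : y ≠ x := hymem.2.2
    set π' : Equiv.Perm (Fin (n + 3 * (m / 2 - 1))) :=
      Equiv.swap x i * (Equiv.swap y i * π) with hπ'def
    have hπ'i : π' i = i := by
      simp only [hπ'def, Equiv.Perm.mul_apply, ← hx]
      rw [Equiv.swap_apply_of_ne_of_ne hyx.symm hxi, Equiv.swap_apply_left]
    have hsub : π'.support ⊆ π.support := by
      intro z hz
      by_contra hzs
      have hzfix : π z = z := Equiv.Perm.notMem_support.mp hzs
      have hzx : z ≠ x := fun h => hzs (h ▸ hxs)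
      have hzy : z ≠ y := fun h => hzs (h ▸ hys)
      have hzi : z ≠ i := fun h => hzs (h ▸ hi)
      have hfix' : π' z = z := by
        simp only [hπ'def, Equiv.Perm.mul_apply, hzfix]
        rw [Equiv.swap_apply_of_ne_of_ne hzy hzi, Equiv.swap_apply_of_ne_of_ne hzx hzi]
      exact Equiv.Perm.mem_support.mp hz hfix'
    have hinots : i ∉ π'.support := Equiv.Perm.notMem_support.mpr hπ'i
    have hcard' : π'.support.card ≤ k := by
      have hss : π'.support ⊂ π.support := ⟨hsub, fun h => hinots (h hi)⟩
      have := Finset.card_lt_card hss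
      omega
    have hsign' : Equiv.Perm.sign π' = 1 := by
      simp [hπ'def, Equiv.Perm.sign_swap hxi, Equiv.Perm.sign_swap hyi, hsign]
    have hmoved' : ∀ z, π' z ≠ z → z.val < n ∨ z.val = n + 3 * (m / 2 - 1) - 1 := by
      intro z hz
      exact hmoved z (Equiv.Perm.mem_support.mp (hsub (Equiv.Perm.mem_support.mpr hz)))
    obtain ⟨cs', hprod', hstruct', hpair'⟩ := ih π' hcard' hsign' hmoved'
    have hmy : π y ≠ y := Equiv.Perm.mem_support.mp hys
    have hmx : π x ≠ x := Equiv.Perm.mem_support.mp hxs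
    have hcx : x ∉ OL.toFinset := hnotOL x (hmoved x hmx)
    have hcy : y ∉ OL.toFinset := hnotOL y (hmoved y hmy)
    have hci : i ∉ OL.toFinset := hnotOL i (hmoved i hmovi)
    -- the two new m-cycles
    set c : Equiv.Perm (Fin (n + 3 * (m / 2 - 1))) := (x :: i :: OL).formPerm with hcdef
    set c' : Equiv.Perm (Fin (n + 3 * (m / 2 - 1))) := (y :: i :: OL).formPerm with hc'def
    have hndx : (x :: i :: OL).Nodup := by
      refine List.nodup_cons.mpr ⟨?_, List.nodup_cons.mpr
        ⟨fun h => hci (List.mem_toFinset.mpr h), hnd⟩⟩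
      simp only [List.mem_cons]
      rintro (h | h)
      · exact hxi h
      · exact hcx (List.mem_toFinset.mpr h)
    have hndy : (y :: i :: OL).Nodup := by
      refine List.nodup_cons.mpr ⟨?_, List.nodup_cons.mpr
        ⟨fun h => hci (List.mem_toFinset.mpr h), hnd⟩⟩
      simp only [List.mem_cons]
      rintro (h | h)
      · exact hyi h
      · exact hcy (List.mem_toFinset.mpr h)
    have hlenx : (x :: i :: OL).length = m := by simp [hlen]; omega
    have hleny : (y :: i :: OL).length = m := by simp [hlen]; omega
    have hne1x : ∀ z, (x :: i :: OL) ≠ [z] := by intro z; simp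
    have hne1y : ∀ z, (y :: i :: OL) ≠ [z] := by intro z; simp
    have hsuppc : c.support = insert x (insert i OL.toFinset) := by
      rw [hcdef, List.support_formPerm_of_nodup _ hndx hne1x]; simp
    have hsuppc' : c'.support = insert y (insert i OL.toFinset) := by
      rw [hc'def, List.support_formPerm_of_nodup _ hndy hne1y]; simp
    have hcardc : c.support.card = m := by
      rw [hcdef, List.support_formPerm_of_nodup _ hndx hne1x,
        List.toFinset_card_of_nodup hndx, hlenx]
    have hcardc' : c'.support.card = m := by
      rw [hc'def, List.support_formPerm_of_nodup _ hndy hne1y,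
        List.toFinset_card_of_nodup hndy, hleny]
    have hcycc : c.IsCycle := List.isCycle_formPerm hndx (by rw [hlenx]; omega)
    have hcycc' : c'.IsCycle := List.isCycle_formPerm hndy (by rw [hleny]; omega)
    have hkey : c' * c⁻¹ = Equiv.swap y i * Equiv.swap x i := by
      rw [hc'def, hcdef, List.formPerm_cons_cons, List.formPerm_cons_cons,
        mul_inv_rev, Equiv.swap_inv]
      group
    refine ⟨c' :: c⁻¹ :: cs', ?_, ?_, ?_⟩
    · rw [List.prod_cons, List.prod_cons, ← hprod', ← mul_assoc, hkey, hπ'def]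
      simp [← mul_assoc, Equiv.swap_mul_self]
    · intro d hd
      simp only [List.mem_cons] at hd
      rcases hd with rfl | rfl | hd
      · exact ⟨hcycc', hcardc', y, i, hys, hi, hyi, hsuppc'⟩
      · refine ⟨hcycc.inv, ?_, x, i, hxs, hi, hxi, ?_⟩
        · rw [Equiv.Perm.support_inv]; exact hcardc
        · rw [Equiv.Perm.support_inv]; exact hsuppc
      · obtain ⟨hcyc, hcar, a, b, has, hbs, hab, hsupp⟩ := hstruct' d hd
        exact ⟨hcyc, hcar, a, b, hsub has, hsub hbs, hab, hsupp⟩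
    · have hdsupp : ∀ d ∈ cs', i ∉ d.support := by
        intro d hd hmem
        obtain ⟨a, b, has, hbs, _, hsupp⟩ := (hstruct' d hd).2.2
        rw [hsupp] at hmem
        rcases Finset.mem_insert.mp hmem with h | hmem2
        · exact hinots (h ▸ has)
        rcases Finset.mem_insert.mp hmem2 with h | h
        · exact hinots (h ▸ hbs)
        · exact hci h
      have hic' : i ∈ c'.support := by rw [hsuppc']; simp
      have hic : i ∈ c⁻¹.support := by rw [Equiv.Perm.support_inv, hsuppc]; simp
      refine List.Pairwise.cons ?_ (List.Pairwise.cons ?_ hpair')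
      · intro d hd
        rcases List.mem_cons.mp hd with hd | hd
        · subst hd
          intro h
          rw [Equiv.Perm.support_inv, hsuppc', hsuppc] at h
          have : y ∈ insert x (insert i OL.toFinset) := h ▸ Finset.mem_insert_self _ _
          rcases Finset.mem_insert.mp this with h' | h'
          · exact hyx h'
          rcases Finset.mem_insert.mp h' with h'' | h''
          · exact hyi h''
          · exact hcy h''
        · intro h
          exact hdsupp d hd (h ▸ hic')
      · intro d hd h
        exact hdsupp d hd (h ▸ hic)

theorem stmt12 (m n : ℕ) (hm : 4 ≤ m) (heven : Even m) (hmn : m ≤ n)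
    (σ : Equiv.Perm (Fin (n + 3 * (m / 2 - 1))))
    (hfix : ∀ i : Fin (n + 3 * (m / 2 - 1)), n ≤ i.val → σ i = i) :
    ∃ cs : List (Equiv.Perm (Fin (n + 3 * (m / 2 - 1)))),
      σ⁻¹ = cs.prod ∧
      (∀ c ∈ cs, c.IsCycle ∧ c.support.card = m ∧
        ∃ i : Fin (n + 3 * (m / 2 - 1)), n ≤ i.val ∧ c i ≠ i) ∧
      cs.Pairwise (fun c d => c.support ≠ d.support) := by
  have hm2 : m % 2 = 0 := Nat.even_iff.mp heven
  have hN3 : n + 3 ≤ n + 3 * (m / 2 - 1) := by omega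
  -- the outsider list
  set OL : List (Fin (n + 3 * (m / 2 - 1))) :=
    (List.range (m - 2)).pmap (fun k hk => (⟨n + k, hk⟩ : Fin (n + 3 * (m / 2 - 1))))
      (fun k hk => by simp only [List.mem_range] at hk; omega) with hOL
  have hndOL : OL.Nodup := by
    refine List.Nodup.pmap ?_ List.nodup_range
    intro a _ b _ h
    have := congrArg Fin.val h
    simp only at this
    omega
  have hlenOL : OL.length = m - 2 := by
    rw [hOL, List.length_pmap, List.length_range]
  have hvalOL : ∀ o ∈ OL, n ≤ o.val ∧ o.val < n + 3 * (m / 2 - 1) - 1 := by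
    intro o ho
    rw [hOL, List.mem_pmap] at ho
    obtain ⟨k, hk, rfl⟩ := ho
    rw [List.mem_range] at hk
    constructor
    · simp
    · simp only
      omega
  have ho0 : (⟨n, by omega⟩ : Fin (n + 3 * (m / 2 - 1))) ∈ OL.toFinset := by
    rw [List.mem_toFinset, hOL, List.mem_pmap]
    exact ⟨0, by rw [List.mem_range]; omega, by simp⟩
  have ho0val : ∀ c : Equiv.Perm (Fin (n + 3 * (m / 2 - 1))),
      (⟨n, by omega⟩ : Fin (n + 3 * (m / 2 - 1))) ∈ c.support →
      ∃ i : Fin (n + 3 * (m / 2 - 1)), n ≤ i.val ∧ c i ≠ i := by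
    intro c hc
    exact ⟨⟨n, by omega⟩, le_refl n, Equiv.Perm.mem_support.mp hc⟩
  have hσmoved : ∀ z : Fin (n + 3 * (m / 2 - 1)), σ⁻¹ z ≠ z → z.val < n := by
    intro z hz
    by_contra h
    push_neg at h
    exact hz (Equiv.Perm.inv_eq_iff_eq.mpr (hfix z h).symm)
  rcases Int.units_eq_one_or (Equiv.Perm.sign σ⁻¹) with hsgn | hsgn
  · -- even case
    obtain ⟨cs, hprod, hstruct, hpair⟩ := core12 m n hm hmn OL hndOL hlenOL hvalOL
      σ⁻¹.support.card σ⁻¹ le_rfl hsgn (fun z hz => Or.inl (hσmoved z hz))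
    refine ⟨cs, hprod, ?_, hpair⟩
    intro c hc
    obtain ⟨hcyc, hcar, a, b, _, _, _, hsupp⟩ := hstruct c hc
    refine ⟨hcyc, hcar, ho0val c ?_⟩
    rw [hsupp]
    exact Finset.mem_insert_of_mem (Finset.mem_insert_of_mem ho0)
  · -- odd case : one extra cycle first
    set z1 : Fin (n + 3 * (m / 2 - 1)) := ⟨n + 3 * (m / 2 - 1) - 1, by omega⟩ with hz1
    set Ls : List (Fin (n + 3 * (m / 2 - 1))) :=
      (List.range (m - 1)).pmap (fun k hk => (⟨k, hk⟩ : Fin (n + 3 * (m / 2 - 1))))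
        (fun k hk => by simp only [List.mem_range] at hk; omega) with hLs
    have hvalLs : ∀ o ∈ Ls, o.val < m - 1 := by
      intro o ho
      rw [hLs, List.mem_pmap] at ho
      obtain ⟨k, hk, rfl⟩ := ho
      rw [List.mem_range] at hk
      exact hk
    have hndLs : Ls.Nodup := by
      refine List.Nodup.pmap ?_ List.nodup_range
      intro a _ b _ h
      have := congrArg Fin.val h
      simpa using this
    have hnd0 : (z1 :: Ls).Nodup := by
      refine List.nodup_cons.mpr ⟨?_, hndLs⟩
      intro h
      have := hvalLs z1 h
      rw [hz1] at this
      simp only at this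
      omega
    have hlen0 : (z1 :: Ls).length = m := by
      rw [List.length_cons, hLs, List.length_pmap, List.length_range]
      omega
    set c₀ : Equiv.Perm (Fin (n + 3 * (m / 2 - 1))) := (z1 :: Ls).formPerm with hc₀
    have hne0 : ∀ z, (z1 :: Ls) ≠ [z] := by
      intro z h
      have := congrArg List.length h
      rw [hlen0] at this
      simp at this
      omega
    have hsupp0 : c₀.support = (z1 :: Ls).toFinset :=
      List.support_formPerm_of_nodup _ hnd0 hne0
    have hcard0 : c₀.support.card = m := by
      rw [hsupp0, List.toFinset_card_of_nodup hnd0, hlen0]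
    have hcyc0 : c₀.IsCycle := List.isCycle_formPerm hnd0 (by rw [hlen0]; omega)
    have hsign0 : Equiv.Perm.sign c₀ = -1 := by
      rw [hcyc0.sign, hcard0, Even.neg_one_pow heven]
    have hsignπ : Equiv.Perm.sign (c₀⁻¹ * σ⁻¹) = 1 := by
      rw [map_mul, Equiv.Perm.sign_inv, hsign0, hsgn]
      rfl
    have hnotsupp : ∀ z : Fin (n + 3 * (m / 2 - 1)),
        n ≤ z.val → z.val ≠ n + 3 * (m / 2 - 1) - 1 → z ∉ c₀.support := by
      intro z hzn hzN h
      rw [hsupp0, List.mem_toFinset, List.mem_cons] at h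
      rcases h with h | h
      · exact hzN (by rw [h, hz1])
      · have := hvalLs z h
        omega
    have hmovedπ : ∀ z : Fin (n + 3 * (m / 2 - 1)), (c₀⁻¹ * σ⁻¹) z ≠ z →
        z.val < n ∨ z.val = n + 3 * (m / 2 - 1) - 1 := by
      intro z hz
      by_contra h
      push_neg at h
      obtain ⟨h1, h2⟩ := h
      have hσz : σ⁻¹ z = z := by
        by_contra h'
        exact absurd (hσmoved z h') (by omega)
      have hc₀z : c₀⁻¹ z = z := by
        rw [Equiv.Perm.inv_eq_iff_eq]
        exact (Equiv.Perm.notMem_support.mp (hnotsupp z (by omega) h2)).symm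
      exact hz (by rw [Equiv.Perm.mul_apply, hσz, hc₀z])
    obtain ⟨cs', hprod', hstruct', hpair'⟩ := core12 m n hm hmn OL hndOL hlenOL hvalOL
      (c₀⁻¹ * σ⁻¹).support.card (c₀⁻¹ * σ⁻¹) le_rfl hsignπ hmovedπ
    refine ⟨c₀ :: cs', ?_, ?_, ?_⟩
    · rw [List.prod_cons, ← hprod', ← mul_assoc, mul_inv_cancel, one_mul]
    · intro d hd
      rcases List.mem_cons.mp hd with rfl | hd
      · refine ⟨hcyc0, hcard0, z1, ?_, ?_⟩
        · rw [hz1]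
          simp only
          omega
        · refine Equiv.Perm.mem_support.mp ?_
          rw [hsupp0, List.mem_toFinset]
          exact List.mem_cons_self
      · obtain ⟨hcyc, hcar, a, b, _, _, _, hsupp⟩ := hstruct' d hd
        refine ⟨hcyc, hcar, ho0val d ?_⟩
        rw [hsupp]
        exact Finset.mem_insert_of_mem (Finset.mem_insert_of_mem ho0)
    · refine List.Pairwise.cons ?_ hpair'
      intro d hd heq
      obtain ⟨_, _, a, b, _, _, _, hsupp⟩ := hstruct' d hd
      have hin : (⟨n, by omega⟩ : Fin (n + 3 * (m / 2 - 1))) ∈ d.support := by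
        rw [hsupp]
        exact Finset.mem_insert_of_mem (Finset.mem_insert_of_mem ho0)
      rw [← heq] at hin
      exact hnotsupp _ (le_refl n) (by simp only; omega) hin
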